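/- Along an A₁⁽¹⁾ X-variable sequence the two exchange invariants are conserved: if r is a sequence of nonzero elements of F satisfying r(j+1) = (1 + x₁(j))·r(j) for all j ∈ ℕ, then for every j ∈ ℕ one has r(j)·(1 + x₁(j) + x₁(j)·x₂(j)) = r(0)·(1 + x₁(0) + x₁(0)·x₂(0)) and r(j)²·x₁(j)·x₂(j) = r(0)²·x₁(0)·x₂(0). -/

import Mathlib

/-- Along an `A₁⁽¹⁾` X-variable sequence the two exchange invariants are conserved. -/
theorem a11_exchange_invariants {F : Type*} [Field F] (x₁ x₂ : ℕ → F)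
    (hx₁ : ∀ j, x₁ j ≠ 0) (hx₁' : ∀ j, 1 + x₁ j ≠ 0)
    (hmut₁ : ∀ j, x₁ (j + 1) * (1 + x₁ j) ^ 2 = x₂ j * (x₁ j) ^ 2)
    (hmut₂ : ∀ j, x₂ (j + 1) * x₁ j = 1)
    (r : ℕ → F) (hr : ∀ j, r j ≠ 0)
    (hrec : ∀ j, r (j + 1) = (1 + x₁ j) * r j) :
    ∀ j, r j * (1 + x₁ j + x₁ j * x₂ j) = r 0 * (1 + x₁ 0 + x₁ 0 * x₂ 0) ∧
      (r j) ^ 2 * x₁ j * x₂ j = (r 0) ^ 2 * x₁ 0 * x₂ 0 := by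
  intro j
  induction j with
  | zero => exact ⟨rfl, rfl⟩
  | succ j ih =>
    obtain ⟨ih1, ih2⟩ := ih
    have ha := hx₁ j
    have hs := hx₁' j
    have h1 : x₁ (j + 1) = x₂ j * (x₁ j) ^ 2 / (1 + x₁ j) ^ 2 := by
      field_simp
      linear_combination hmut₁ j
    have h2 : x₂ (j + 1) = (x₁ j)⁻¹ := by
      field_simp
      linear_combination hmut₂ j
    constructor
    · rw [← ih1, hrec j, h1, h2]
      field_simp
      ring
    · rw [← ih2, hrec j, h1, h2]
      field_simp
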